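/- Local complementation preserves connected components: for any simple graph G and vertex a, two vertices lie in the same connected component of G if and only if they lie in the same connected component of τ_a(G). -/

import Mathlib

namespace Foliage

variable {V : Type*}

def lc (G : SimpleGraph V) (x : V) : SimpleGraph V where
  Adj v w := v ≠ w ∧ ¬ (G.Adj v w ↔ G.Adj x v ∧ G.Adj x w)
  symm := ⟨by
    intro v w h
    refine ⟨h.1.symm, fun hiff => h.2 ?_⟩
    constructor
    · intro hvw; exact (hiff.mp (G.adj_symm hvw)).symm
    · intro hx; exact G.adj_symm (hiff.mpr hx.symm)⟩
  loopless := ⟨fun v h => h.1 rfl⟩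

private lemma lc_adj_reach (G : SimpleGraph V) (x v w : V)
    (h : (lc G x).Adj v w) : G.Reachable v w := by
  obtain ⟨hne, hiff⟩ := h
  by_cases hvw : G.Adj v w
  · exact hvw.reachable
  · have hx : G.Adj x v ∧ G.Adj x w := by
      by_contra hc
      exact hiff ⟨fun h => absurd h hvw, fun h => absurd h hc⟩
    exact (hx.1.symm.reachable).trans hx.2.reachable

private lemma adj_lc_reach (G : SimpleGraph V) (x v w : V)
    (h : G.Adj v w) : (lc G x).Reachable v w := by
  by_cases hx : G.Adj x v ∧ G.Adj x w
  · have h1 : (lc G x).Adj v x :=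
      ⟨hx.1.ne', fun hi =>
        G.loopless.irrefl x (hi.mp hx.1.symm).2⟩
    have h2 : (lc G x).Adj x w :=
      ⟨hx.2.ne, fun hi =>
        G.loopless.irrefl x (hi.mp hx.2).1⟩
    exact h1.reachable.trans h2.reachable
  · exact SimpleGraph.Adj.reachable ⟨h.ne, fun hi => hx (hi.mp h)⟩

/-- Local complementation preserves connected components. -/
theorem lc_preserves_reachable (G : SimpleGraph V) (x : V) (v w : V) :
    G.Reachable v w ↔ (lc G x).Reachable v w := by
  constructor
  · intro ⟨p⟩
    induction p with
    | nil => exact SimpleGraph.Reachable.refl _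
    | cons h _ ih => exact (adj_lc_reach G x _ _ h).trans ih
  · intro ⟨p⟩
    induction p with
    | nil => exact SimpleGraph.Reachable.refl _
    | cons h _ ih => exact (lc_adj_reach G x _ _ h).trans ih

end Foliage
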